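/- Let κ : ℝ → ℝ be twice continuously differentiable and positive, and let r : ℝ → ℝ² satisfy r'(θ) = (-sin θ, cos θ)/κ(θ) for all θ. Fix θ₀ ∈ ℝ. For small Δθ > 0 let p₊(Δθ) be the intersection of the tangent lines to r at θ₀ and at θ₀ + Δθ, and let p₋(Δθ) be the intersection of the tangent lines to r at θ₀ - Δθ and at θ₀ (where the tangent line at θ is the line through r(θ) with direction (-sin θ, cos θ)), and set L(Δθ) = ⟨p₊(Δθ) - p₋(Δθ), (-sin θ₀, cos θ₀)⟩. Then as Δθ → 0⁺, 2·tan(Δθ/2)/L(Δθ) = κ(θ₀) + O((Δθ)²). -/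

import Mathlib

open Real Asymptotics

lemma pair_decomp (v : ℝ × ℝ) (a : ℝ) (h : v.1 * Real.cos a + v.2 * Real.sin a = 0) :
    v = (-v.1 * Real.sin a + v.2 * Real.cos a) • (-Real.sin a, Real.cos a) := by
  have hsc := Real.sin_sq_add_cos_sq a
  ext
  · simp only [Prod.smul_fst, smul_eq_mul]
    linear_combination Real.cos a * h - v.1 * hsc
  · simp only [Prod.smul_snd, smul_eq_mul]
    linear_combination Real.sin a * h - v.2 * hsc

lemma tangent_inter (r : ℝ → ℝ × ℝ) (a b : ℝ) (h : Real.sin (b - a) ≠ 0) (p : ℝ × ℝ)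
    (hp : p = r a + (((((r b).1 - (r a).1) * Real.cos b + ((r b).2 - (r a).2) * Real.sin b)
        / Real.sin (b - a)) • (-Real.sin a, Real.cos a))) :
    (∃ s : ℝ, p = r a + s • (-Real.sin a, Real.cos a)) ∧
    (∃ s : ℝ, p = r b + s • (-Real.sin b, Real.cos b)) ∧
    (∀ q : ℝ × ℝ, ((∃ s : ℝ, q = r a + s • (-Real.sin a, Real.cos a)) ∧
        (∃ s : ℝ, q = r b + s • (-Real.sin b, Real.cos b))) → q = p) := by
  set F : ℝ := ((r b).1 - (r a).1) * Real.cos b + ((r b).2 - (r a).2) * Real.sin b with hF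
  set c : ℝ := F / Real.sin (b - a) with hc
  have hcs : c * Real.sin (b - a) = F := div_mul_cancel₀ F h
  have hsub : Real.sin (b - a) = Real.sin b * Real.cos a - Real.cos b * Real.sin a := by
    rw [Real.sin_sub]
  refine ⟨⟨c, hp⟩, ?_, ?_⟩
  · have hv : (p - r b).1 * Real.cos b + (p - r b).2 * Real.sin b = 0 := by
      rw [hp]
      simp only [Prod.fst_add, Prod.snd_add, Prod.smul_fst, Prod.smul_snd, smul_eq_mul,
        Prod.fst_sub, Prod.snd_sub]
      have : c * (Real.sin b * Real.cos a - Real.cos b * Real.sin a) = F := by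
        rw [← hsub]; exact hcs
      linear_combination this
    refine ⟨-(p - r b).1 * Real.sin b + (p - r b).2 * Real.cos b, ?_⟩
    have := pair_decomp (p - r b) b hv
    rw [← this]; abel
  · rintro q ⟨⟨s, hs⟩, ⟨t, ht⟩⟩
    have hq : (q - r b).1 * Real.cos b + (q - r b).2 * Real.sin b = 0 := by
      rw [ht]
      simp only [Prod.fst_add, Prod.snd_add, Prod.smul_fst, Prod.smul_snd, smul_eq_mul,
        Prod.fst_sub, Prod.snd_sub, add_sub_cancel_left]
      ring
    have hkey : -F + s * (Real.sin b * Real.cos a - Real.cos b * Real.sin a) = 0 := by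
      rw [hs] at hq
      simp only [Prod.fst_add, Prod.snd_add, Prod.smul_fst, Prod.smul_snd, smul_eq_mul,
        Prod.fst_sub, Prod.snd_sub] at hq
      linear_combination hq
    have hsF : s = c := by
      rw [← hsub] at hkey
      rw [hc, eq_div_iff h]
      linarith [hkey]
    rw [hs, hsF, hp]

theorem stmt19 (κ : ℝ → ℝ) (hκ : ContDiff ℝ 2 κ) (hκpos : ∀ θ, 0 < κ θ)
    (r : ℝ → ℝ × ℝ)
    (hr : ∀ θ : ℝ, HasDerivAt r (-Real.sin θ / κ θ, Real.cos θ / κ θ) θ)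
    (θ₀ : ℝ) :
    ∃ ε > (0:ℝ), ∃ pPlus pMinus : ℝ → ℝ × ℝ,
      (∀ Δθ ∈ Set.Ioo (0:ℝ) ε,
        ((∃ s : ℝ, pPlus Δθ = r θ₀ + s • (-Real.sin θ₀, Real.cos θ₀)) ∧
         (∃ s : ℝ, pPlus Δθ = r (θ₀ + Δθ)
            + s • (-Real.sin (θ₀ + Δθ), Real.cos (θ₀ + Δθ))) ∧
         (∀ q : ℝ × ℝ,
            ((∃ s : ℝ, q = r θ₀ + s • (-Real.sin θ₀, Real.cos θ₀)) ∧
             (∃ s : ℝ, q = r (θ₀ + Δθ)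
                + s • (-Real.sin (θ₀ + Δθ), Real.cos (θ₀ + Δθ)))) → q = pPlus Δθ)) ∧
        ((∃ s : ℝ, pMinus Δθ = r (θ₀ - Δθ)
            + s • (-Real.sin (θ₀ - Δθ), Real.cos (θ₀ - Δθ))) ∧
         (∃ s : ℝ, pMinus Δθ = r θ₀ + s • (-Real.sin θ₀, Real.cos θ₀)) ∧
         (∀ q : ℝ × ℝ,
            ((∃ s : ℝ, q = r (θ₀ - Δθ)
                + s • (-Real.sin (θ₀ - Δθ), Real.cos (θ₀ - Δθ))) ∧
             (∃ s : ℝ, q = r θ₀ + s • (-Real.sin θ₀, Real.cos θ₀))) → q = pMinus Δθ))) ∧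
      ((fun Δθ => 2 * Real.tan (Δθ / 2)
          / ((pPlus Δθ - pMinus Δθ).1 * (-Real.sin θ₀)
              + (pPlus Δθ - pMinus Δθ).2 * Real.cos θ₀)
          - κ θ₀)
        =O[nhdsWithin (0:ℝ) (Set.Ioi 0)] fun Δθ => Δθ ^ 2) := by
  have hκne : ∀ θ, κ θ ≠ 0 := fun θ => (hκpos θ).ne'
  set φ : ℝ → ℝ := fun t => (κ (θ₀ + t))⁻¹ with hφdef
  have hφpos : ∀ t, 0 < φ t := fun t => inv_pos.mpr (hκpos _)
  have hφC2 : ContDiff ℝ 2 φ :=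
    (hκ.comp (contDiff_const.add contDiff_id)).inv (fun t => hκne _)
  have hφcont : Continuous φ := hφC2.continuous
  set F : ℝ → ℝ := fun u => ((r (θ₀+u)).1 - (r θ₀).1) * Real.cos (θ₀+u)
      + ((r (θ₀+u)).2 - (r θ₀).2) * Real.sin (θ₀+u) with hFdef
  -- integral representation of F
  have hrc : ∀ t : ℝ, HasDerivAt (fun t => r (θ₀ + t))
      (-Real.sin (θ₀+t) * φ t, Real.cos (θ₀+t) * φ t) t := by
    intro t
    have h1 := HasDerivAt.comp_const_add θ₀ t (hr (θ₀ + t))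
    simpa [hφdef, div_eq_mul_inv] using h1
  have hint : ∀ g : ℝ → ℝ, Continuous g → ∀ (a b : ℝ),
      IntervalIntegrable (fun t => g t * φ t) MeasureTheory.volume a b :=
    fun g hg a b => (hg.mul hφcont).intervalIntegrable a b
  have hx : ∀ u : ℝ, (r (θ₀+u)).1 - (r θ₀).1 = ∫ t in (0:ℝ)..u, -Real.sin (θ₀+t) * φ t := by
    intro u
    rw [intervalIntegral.integral_eq_sub_of_hasDerivAt (f := fun t => (r (θ₀+t)).1)
      (fun t _ => (hrc t).fst)
      (hint _ (by exact (continuous_sin.comp (continuous_const.add continuous_id)).neg) 0 u)]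
    simp
  have hy : ∀ u : ℝ, (r (θ₀+u)).2 - (r θ₀).2 = ∫ t in (0:ℝ)..u, Real.cos (θ₀+t) * φ t := by
    intro u
    rw [intervalIntegral.integral_eq_sub_of_hasDerivAt (f := fun t => (r (θ₀+t)).2)
      (fun t _ => (hrc t).snd)
      (hint _ (by exact continuous_cos.comp (continuous_const.add continuous_id)) 0 u)]
    simp
  have hFint : ∀ u : ℝ, F u = ∫ t in (0:ℝ)..u, Real.sin (u - t) * φ t := by
    intro u
    rw [hFdef]
    simp only
    have i1 : IntervalIntegrable (fun t => -Real.sin (θ₀+t) * φ t * Real.cos (θ₀+u))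
        MeasureTheory.volume 0 u := by
      apply Continuous.intervalIntegrable
      exact (((continuous_sin.comp (continuous_const.add continuous_id)).neg.mul hφcont).mul
        continuous_const)
    have i2 : IntervalIntegrable (fun t => Real.cos (θ₀+t) * φ t * Real.sin (θ₀+u))
        MeasureTheory.volume 0 u := by
      apply Continuous.intervalIntegrable
      exact (((continuous_cos.comp (continuous_const.add continuous_id)).mul hφcont).mul
        continuous_const)
    rw [hx u, hy u, ← intervalIntegral.integral_mul_const, ← intervalIntegral.integral_mul_const,
      ← intervalIntegral.integral_add i1 i2]
    apply intervalIntegral.integral_congr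
    intro t _
    simp only
    rw [show u - t = (θ₀ + u) - (θ₀ + t) by ring, Real.sin_sub]
    ring
  have hFneg : ∀ u : ℝ, F (-u) = ∫ t in (0:ℝ)..u, Real.sin (u - t) * φ (-t) := by
    intro u
    have h1 : F (-u) = ∫ t in (0:ℝ)..(-u), Real.sin (-u - t) * φ t := hFint (-u)
    have h2 := intervalIntegral.integral_comp_neg (a := 0) (b := u)
      (fun t => Real.sin (-u - t) * φ t)
    rw [neg_zero] at h2
    have h3 : ∫ t in (0:ℝ)..(-u), Real.sin (-u - t) * φ t
        = - ∫ t in (-u:ℝ)..0, Real.sin (-u - t) * φ t := by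
      rw [intervalIntegral.integral_symm]
    rw [h1, h3, ← h2, ← intervalIntegral.integral_neg]
    apply intervalIntegral.integral_congr
    intro t _
    simp only
    rw [show -u - -t = -(u - t) by ring, Real.sin_neg]
    ring
  set G : ℝ → ℝ := fun u => F u + F (-u) with hGdef
  have hφnegcont : Continuous fun t : ℝ => φ (-t) := hφcont.comp continuous_neg
  have hGint : ∀ u : ℝ, G u = ∫ t in (0:ℝ)..u, Real.sin (u - t) * (φ t + φ (-t)) := by
    intro u
    have i1 : IntervalIntegrable (fun t => Real.sin (u - t) * φ t) MeasureTheory.volume 0 u := by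
      apply Continuous.intervalIntegrable
      exact ((Real.continuous_sin.comp (continuous_const.sub continuous_id)).mul hφcont)
    have i2 : IntervalIntegrable (fun t => Real.sin (u - t) * φ (-t))
        MeasureTheory.volume 0 u := by
      apply Continuous.intervalIntegrable
      exact ((Real.continuous_sin.comp (continuous_const.sub continuous_id)).mul hφnegcont)
    rw [hGdef]
    simp only
    rw [hFint u, hFneg u, ← intervalIntegral.integral_add i1 i2]
    apply intervalIntegral.integral_congr
    intro t _
    ring
  -- ∫ sin(u-t) dt = 1 - cos u
  have hsinint : ∀ u : ℝ, (∫ t in (0:ℝ)..u, Real.sin (u - t)) = 1 - Real.cos u := by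
    intro u
    have hd : ∀ t : ℝ, HasDerivAt (fun t => Real.cos (u - t)) (Real.sin (u - t)) t := by
      intro t
      have h1 := (Real.hasDerivAt_cos (u - t)).comp t
        ((hasDerivAt_id t).const_sub u)
      simpa [Function.comp_def] using h1
    rw [intervalIntegral.integral_eq_sub_of_hasDerivAt (fun t _ => hd t)
      ((Real.continuous_sin.comp (continuous_const.sub continuous_id)).intervalIntegrable 0 u)]
    simp
  set ψ : ℝ → ℝ := fun t => φ t + φ (-t) - 2 * φ 0 with hψdef
  set R : ℝ → ℝ := fun u => ∫ t in (0:ℝ)..u, Real.sin (u - t) * ψ t with hRdef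
  have hψcont : Continuous ψ := (hφcont.add hφnegcont).sub continuous_const
  have hGR : ∀ u : ℝ, G u = 2 * φ 0 * (1 - Real.cos u) + R u := by
    intro u
    have i1 : IntervalIntegrable (fun t => Real.sin (u - t) * (2 * φ 0))
        MeasureTheory.volume 0 u := by
      apply Continuous.intervalIntegrable
      exact ((Real.continuous_sin.comp (continuous_const.sub continuous_id)).mul continuous_const)
    have i2 : IntervalIntegrable (fun t => Real.sin (u - t) * ψ t) MeasureTheory.volume 0 u := by
      apply Continuous.intervalIntegrable
      exact ((Real.continuous_sin.comp (continuous_const.sub continuous_id)).mul hψcont)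
    have : (∫ t in (0:ℝ)..u, Real.sin (u - t) * (φ t + φ (-t)))
        = (∫ t in (0:ℝ)..u, Real.sin (u - t) * (2 * φ 0)) + R u := by
      rw [hRdef]
      simp only
      rw [← intervalIntegral.integral_add i1 i2]
      apply intervalIntegral.integral_congr
      intro t _
      simp only [hψdef]
      ring
    rw [hGint u, this, intervalIntegral.integral_mul_const, hsinint u]
    ring
  -- second derivative bound for φ
  have hφdiff : Differentiable ℝ φ := hφC2.differentiable (by norm_num)
  have hφ'C1 : ContDiff ℝ 1 (deriv φ) := by
    have := (contDiff_succ_iff_deriv (n := 1)).mp (by exact_mod_cast hφC2)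
    exact this.2.2
  have hφ'diff : Differentiable ℝ (deriv φ) := hφ'C1.differentiable (by norm_num)
  have hφ''cont : Continuous (deriv (deriv φ)) := by
    have := (contDiff_succ_iff_deriv (n := 0)).mp (by exact_mod_cast hφ'C1)
    exact this.2.2.continuous
  obtain ⟨M, hM⟩ := (isCompact_Icc (a := -π) (b := π)).exists_bound_of_continuousOn
    (hφ''cont.continuousOn)
  have hM0 : 0 ≤ M := le_trans (norm_nonneg _) (hM 0 (by constructor <;> [linarith [Real.pi_pos]; linarith [Real.pi_pos]]))
  -- deriv φ is M-Lipschitz on [-π, π]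
  have hlip : ∀ x ∈ Set.Icc (-π) π, ∀ y ∈ Set.Icc (-π) π,
      |deriv φ y - deriv φ x| ≤ M * |y - x| := by
    intro x hx y hy
    have := Convex.norm_image_sub_le_of_norm_hasDerivWithin_le
      (f := deriv φ) (f' := deriv (deriv φ)) (s := Set.Icc (-π) π) (C := M)
      (fun z hz => ((hφ'diff z).hasDerivAt).hasDerivWithinAt)
      (fun z hz => hM z hz) (convex_Icc _ _) hx hy
    simpa [Real.norm_eq_abs] using this
  -- ψ(t) bound
  have hψd : ∀ t : ℝ, HasDerivAt ψ (deriv φ t - deriv φ (-t)) t := by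
    intro t
    have h1 : HasDerivAt (fun t : ℝ => φ (-t)) (-deriv φ (-t)) t := by
      have := ((hφdiff (-t)).hasDerivAt).comp t (hasDerivAt_neg t)
      simpa [Function.comp_def] using this
    have h2 := ((hφdiff t).hasDerivAt.add h1).sub_const (2 * φ 0)
    simpa [hψdef, sub_eq_add_neg] using h2
  have hψ0 : ψ 0 = 0 := by simp [hψdef]; ring
  have hψbound : ∀ t ∈ Set.Icc (0:ℝ) π, |ψ t| ≤ 2 * M * t ^ 2 := by
    intro t ht
    have hFTC : ψ t = ∫ s in (0:ℝ)..t, (deriv φ s - deriv φ (-s)) := by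
      rw [intervalIntegral.integral_eq_sub_of_hasDerivAt (fun s _ => hψd s)
        (((hφ'C1.continuous).sub ((hφ'C1.continuous).comp continuous_neg)).intervalIntegrable 0 t),
        hψ0, sub_zero]
    rw [hFTC]
    have hbd : ∀ s ∈ Set.uIoc (0:ℝ) t, ‖deriv φ s - deriv φ (-s)‖ ≤ 2 * M * t := by
      intro s hs
      rw [Set.uIoc_of_le ht.1] at hs
      have hs1 : s ∈ Set.Icc (-π) π := ⟨by linarith [hs.1, Real.pi_pos], le_trans hs.2 ht.2⟩
      have hs2 : (-s) ∈ Set.Icc (-π) π :=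
        ⟨by linarith [hs.2, ht.2], by linarith [hs.1, Real.pi_pos]⟩
      have := hlip (-s) hs2 s hs1
      rw [Real.norm_eq_abs]
      calc |deriv φ s - deriv φ (-s)| ≤ M * |s - -s| := this
        _ = M * (2 * s) := by rw [show s - -s = 2 * s by ring, abs_of_nonneg (by linarith [hs.1])]
        _ ≤ 2 * M * t := by nlinarith [hs.2, hs.1, hM0]
    have := intervalIntegral.norm_integral_le_of_norm_le_const hbd
    rw [Real.norm_eq_abs] at this
    calc |∫ s in (0:ℝ)..t, (deriv φ s - deriv φ (-s))| ≤ 2 * M * t * |t - 0| := this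
      _ = 2 * M * t ^ 2 := by rw [sub_zero, abs_of_nonneg ht.1]; ring
  -- R(u) bound
  have hRbound : ∀ u ∈ Set.Icc (0:ℝ) π, |R u| ≤ 2 * M * u ^ 4 := by
    intro u hu
    have hbd : ∀ t ∈ Set.uIoc (0:ℝ) u, ‖Real.sin (u - t) * ψ t‖ ≤ 2 * M * u ^ 3 := by
      intro t ht
      rw [Set.uIoc_of_le hu.1] at ht
      have ht0 : 0 ≤ t := le_of_lt ht.1
      have htu : t ≤ u := ht.2
      rw [Real.norm_eq_abs, abs_mul]
      have h1 : |Real.sin (u - t)| ≤ u := by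
        calc |Real.sin (u - t)| ≤ |u - t| := Real.abs_sin_le_abs
          _ = u - t := abs_of_nonneg (by linarith)
          _ ≤ u := by linarith
      have h2 : |ψ t| ≤ 2 * M * u ^ 2 := by
        calc |ψ t| ≤ 2 * M * t ^ 2 := hψbound t ⟨ht0, le_trans htu hu.2⟩
          _ ≤ 2 * M * u ^ 2 := by
              have : t ^ 2 ≤ u ^ 2 := pow_le_pow_left₀ ht0 htu 2
              nlinarith [hM0]
      calc |Real.sin (u - t)| * |ψ t| ≤ u * (2 * M * u ^ 2) := by
            apply mul_le_mul h1 h2 (abs_nonneg _) (le_trans (abs_nonneg _) h1)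
        _ = 2 * M * u ^ 3 := by ring
    have := intervalIntegral.norm_integral_le_of_norm_le_const hbd
    rw [Real.norm_eq_abs] at this
    calc |R u| ≤ 2 * M * u ^ 3 * |u - 0| := this
      _ = 2 * M * u ^ 4 := by rw [sub_zero, abs_of_nonneg hu.1]; ring
  -- constants
  set κ₀ : ℝ := κ θ₀ with hκ₀def
  have hκ₀pos : 0 < κ₀ := hκpos θ₀
  have hφ0 : φ 0 = κ₀⁻¹ := by rw [hφdef]; simp [hκ₀def]
  have hφ0pos : 0 < φ 0 := hφpos 0
  -- choose δ for lower bound on G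
  set δ : ℝ := min π (min 1 (2 * φ 0 / (π ^ 2 * (2 * M + 1)))) with hδdef
  have hδpos : 0 < δ := by
    apply lt_min Real.pi_pos
    apply lt_min one_pos
    positivity
  have hδπ : δ ≤ π := min_le_left _ _
  -- lower bound for 1 - cos
  have hcoslb : ∀ u ∈ Set.Ioo (0:ℝ) δ, 2 * u ^ 2 / π ^ 2 ≤ 1 - Real.cos u := by
    intro u hu
    have hu0 : 0 < u := hu.1
    have huπ : u < π := lt_of_lt_of_le hu.2 hδπ
    have h1 : Real.sin (u / 2) ≥ 2 / π * (u / 2) := by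
      apply Real.mul_le_sin (by linarith) (by linarith)
    have h2 : 1 - Real.cos u = 2 * Real.sin (u / 2) ^ 2 := by
      conv_lhs => rw [show u = 2 * (u / 2) by ring, Real.cos_two_mul', Real.cos_sq']
      ring
    rw [h2]
    have ha : 0 < 2 / π * (u / 2) := by positivity
    have h3 : (2 / π * (u / 2)) ^ 2 ≤ Real.sin (u / 2) ^ 2 := by
      apply sq_le_sq'
      · linarith
      · exact h1
    calc 2 * u ^ 2 / π ^ 2 = 2 * (2 / π * (u / 2)) ^ 2 := by
          field_simp
      _ ≤ 2 * Real.sin (u / 2) ^ 2 := by linarith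
  -- lower bound for G
  have hGlb : ∀ u ∈ Set.Ioo (0:ℝ) δ, 2 * φ 0 * u ^ 2 / π ^ 2 ≤ G u := by
    intro u hu
    have hu0 : 0 < u := hu.1
    have huπ : u < π := lt_of_lt_of_le hu.2 hδπ
    have hu1 : u ≤ 1 := le_of_lt (lt_of_lt_of_le hu.2 (le_trans (min_le_right _ _) (min_le_left _ _)))
    have huδ' : u < 2 * φ 0 / (π ^ 2 * (2 * M + 1)) :=
      lt_of_lt_of_le hu.2 (le_trans (min_le_right _ _) (min_le_right _ _))
    have hRu : |R u| ≤ 2 * M * u ^ 4 := hRbound u ⟨le_of_lt hu0, le_of_lt huπ⟩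
    have h1 : 2 * u ^ 2 / π ^ 2 ≤ 1 - Real.cos u := hcoslb u hu
    have hG : G u = 2 * φ 0 * (1 - Real.cos u) + R u := hGR u
    -- 2M u^4 ≤ (2 φ0/π²) u²
    have h2 : 2 * M * u ^ 4 ≤ 2 * φ 0 / π ^ 2 * u ^ 2 := by
      have hπ2 : (0:ℝ) < π ^ 2 := by positivity
      have h3 : u ^ 2 ≤ u := by nlinarith
      have h4 : (2 * M + 1) * u ≤ 2 * φ 0 / π ^ 2 := by
        rw [div_mul_eq_div_div] at huδ'
        calc (2 * M + 1) * u ≤ (2 * M + 1) * (2 * φ 0 / π ^ 2 / (2 * M + 1)) := by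
              apply mul_le_mul_of_nonneg_left (le_of_lt huδ') (by linarith)
          _ = 2 * φ 0 / π ^ 2 := by field_simp
      have h5' : 2 * M * u ^ 2 ≤ (2 * M + 1) * u := by nlinarith [h3, hM0, hu0.le]
      calc 2 * M * u ^ 4 = (2 * M * u ^ 2) * u ^ 2 := by ring
        _ ≤ ((2 * M + 1) * u) * u ^ 2 := mul_le_mul_of_nonneg_right h5' (sq_nonneg u)
        _ ≤ (2 * φ 0 / π ^ 2) * u ^ 2 := mul_le_mul_of_nonneg_right h4 (sq_nonneg u)
    have h5 : 2 * φ 0 * (1 - Real.cos u) ≥ 2 * φ 0 * (2 * u ^ 2 / π ^ 2) := by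
      apply mul_le_mul_of_nonneg_left h1 (by linarith)
    have h6 : R u ≥ -(2 * M * u ^ 4) := by
      have := abs_le.mp hRu
      linarith [this.1]
    rw [hG]
    have e1 : 2 * φ 0 * (2 * u ^ 2 / π ^ 2) = 2 * (2 * φ 0 / π ^ 2 * u ^ 2) := by ring
    have e2 : 2 * φ 0 * u ^ 2 / π ^ 2 = 2 * φ 0 / π ^ 2 * u ^ 2 := by ring
    linarith [h2, h5, h6, e1, e2]
  -- tan half-angle identity
  have htanid : ∀ u : ℝ, Real.cos (u / 2) ≠ 0 →
      Real.tan (u / 2) * Real.sin u = 1 - Real.cos u := by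
    intro u h
    rw [Real.tan_eq_sin_div_cos]
    have h1 : Real.sin u = 2 * Real.sin (u/2) * Real.cos (u/2) := by
      rw [← Real.sin_two_mul]; ring_nf
    have h2 : Real.cos u = 1 - 2 * Real.sin (u/2)^2 := by
      conv_lhs => rw [show u = 2*(u/2) by ring, Real.cos_two_mul', Real.cos_sq']
      ring
    rw [h1, h2]; field_simp; ring
  set T₀ : ℝ × ℝ := (-Real.sin θ₀, Real.cos θ₀) with hT₀
  refine ⟨π, Real.pi_pos, fun u => r θ₀ + (F u / Real.sin u) • T₀,
    fun u => r θ₀ + (-(F (-u)) / Real.sin u) • T₀, fun u hu => ?_, ?_⟩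
  · -- geometry
    have hu0 : 0 < u := hu.1
    have huπ : u < π := hu.2
    have hsin : Real.sin u ≠ 0 := (Real.sin_pos_of_pos_of_lt_pi hu0 huπ).ne'
    constructor
    · -- pPlus on both tangent lines, uniquely
      have hsin' : Real.sin ((θ₀ + u) - θ₀) ≠ 0 := by rwa [add_sub_cancel_left]
      have hFu : F u = ((r (θ₀+u)).1 - (r θ₀).1) * Real.cos (θ₀+u)
          + ((r (θ₀+u)).2 - (r θ₀).2) * Real.sin (θ₀+u) := by rw [hFdef]
      have hp : r θ₀ + (F u / Real.sin u) • T₀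
          = r θ₀ + (((((r (θ₀+u)).1 - (r θ₀).1) * Real.cos (θ₀+u)
            + ((r (θ₀+u)).2 - (r θ₀).2) * Real.sin (θ₀+u)) / Real.sin ((θ₀ + u) - θ₀)) • T₀) := by
        rw [hFu, add_sub_cancel_left]
      exact tangent_inter r θ₀ (θ₀ + u) hsin' _ hp
    · have hsin' : Real.sin ((θ₀ - u) - θ₀) ≠ 0 := by
        rw [show (θ₀ - u) - θ₀ = -u by ring, Real.sin_neg]
        simpa using hsin
      have hFnu : F (-u) = ((r (θ₀-u)).1 - (r θ₀).1) * Real.cos (θ₀-u)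
          + ((r (θ₀-u)).2 - (r θ₀).2) * Real.sin (θ₀-u) := by
        rw [hFdef]
        simp only
        rw [show θ₀ + -u = θ₀ - u by ring]
      have hp : r θ₀ + (-(F (-u)) / Real.sin u) • T₀
          = r θ₀ + (((((r (θ₀-u)).1 - (r θ₀).1) * Real.cos (θ₀-u)
            + ((r (θ₀-u)).2 - (r θ₀).2) * Real.sin (θ₀-u)) / Real.sin ((θ₀ - u) - θ₀)) • T₀) := by
        rw [show (θ₀ - u) - θ₀ = -u by ring, Real.sin_neg, div_neg, ← neg_div, ← hFnu]
      obtain ⟨h1, h2, h3⟩ := tangent_inter r θ₀ (θ₀ - u) hsin' _ hp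
      exact ⟨h2, h1, fun q hq => h3 q ⟨hq.2, hq.1⟩⟩
  · -- asymptotics
    rw [Asymptotics.isBigO_iff]
    refine ⟨κ₀ * (2 * M) * π ^ 2 / (2 * φ 0), ?_⟩
    filter_upwards [Ioo_mem_nhdsGT_of_mem (Set.left_mem_Ico.mpr hδpos)] with u hu
    have hu0 : 0 < u := hu.1
    have huπ : u < π := lt_of_lt_of_le hu.2 hδπ
    have hsinpos : 0 < Real.sin u := Real.sin_pos_of_pos_of_lt_pi hu0 huπ
    have hG0 : 0 < G u := lt_of_lt_of_le (by positivity) (hGlb u hu)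
    have hcoshalf : 0 < Real.cos (u / 2) := by
      apply Real.cos_pos_of_mem_Ioo
      constructor
      · linarith [Real.pi_pos]
      · linarith
    have hLu : ((r θ₀ + (F u / Real.sin u) • T₀) - (r θ₀ + (-(F (-u)) / Real.sin u) • T₀)).1
          * (-Real.sin θ₀)
        + ((r θ₀ + (F u / Real.sin u) • T₀) - (r θ₀ + (-(F (-u)) / Real.sin u) • T₀)).2
          * Real.cos θ₀ = G u / Real.sin u := by
      have hGu : G u = F u + F (-u) := by rw [hGdef]
      simp only [hT₀, Prod.fst_sub, Prod.snd_sub, Prod.fst_add, Prod.snd_add, Prod.smul_fst,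
        Prod.smul_snd, smul_eq_mul]
      rw [hGu]
      have hsc := Real.sin_sq_add_cos_sq θ₀
      linear_combination ((F u + F (-u)) / Real.sin u) * hsc
    rw [hLu, div_div_eq_mul_div]
    have htan : 2 * Real.tan (u / 2) * Real.sin u = 2 * (1 - Real.cos u) := by
      rw [mul_assoc, htanid u hcoshalf.ne']
    rw [htan]
    have hnum : 2 * (1 - Real.cos u) / G u - κ₀ = (-(κ₀ * R u)) / G u := by
      rw [div_sub' hG0.ne']
      congr 1
      have hκφ : κ₀ * φ 0 = 1 := by
        rw [hφ0]; field_simp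
      have := hGR u
      linear_combination (-κ₀) * this - 2 * (1 - Real.cos u) * hκφ
    rw [hnum]
    have hRu : |R u| ≤ 2 * M * u ^ 4 :=
      hRbound u ⟨hu0.le, huπ.le⟩
    have hGlbu : 2 * φ 0 * u ^ 2 / π ^ 2 ≤ G u := hGlb u hu
    rw [Real.norm_eq_abs, Real.norm_eq_abs, abs_div, abs_neg, abs_mul,
      abs_of_pos hκ₀pos, abs_of_pos hG0, abs_of_nonneg (sq_nonneg u)]
    have hd0 : (0:ℝ) < 2 * φ 0 * u ^ 2 / π ^ 2 := by positivity
    calc κ₀ * |R u| / G u ≤ κ₀ * (2 * M * u ^ 4) / (2 * φ 0 * u ^ 2 / π ^ 2) := by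
          exact div_le_div₀ (by positivity)
            (mul_le_mul_of_nonneg_left hRu hκ₀pos.le) hd0 hGlbu
      _ = κ₀ * (2 * M) * π ^ 2 / (2 * φ 0) * u ^ 2 := by
          field_simp
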